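/- Let F be a field of characteristic 0 and n ≥ 2. Consider gl_n(F) = sl_n(F) ⊕ F·e_{jj} for a fixed j, and let B be a symmetric invariant bilinear form on gl_n(F) whose restriction to sl_n(F) × gl_n(F) equals c·tr(xy) for some c ∈ F×. Then B is nondegenerate if and only if B(e_{jj}, e_{jj}) ≠ c(n-1)/n. -/

import Mathlib

open Matrix

lemma aux_tr {F : Type*} [Field F] {n : ℕ} (p q : Fin n) (x : Matrix (Fin n) (Fin n) F) :
    Matrix.trace (Matrix.single p q 1 * x) = x q p := by
  rw [Matrix.trace]
  rw [Finset.sum_eq_single p]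
  · simp
  · intro b _ hb; simp [hb]
  · simp

lemma aux_scalar {F : Type*} [Field F] {n : ℕ} (x : Matrix (Fin n) (Fin n) F)
    (h : ∀ y : Matrix (Fin n) (Fin n) F, Matrix.trace y = 0 → Matrix.trace (y * x) = 0)
    (p : Fin n) : x = x p p • (1 : Matrix (Fin n) (Fin n) F) := by
  ext a b
  by_cases hab : a = b
  · subst hab
    by_cases hap : a = p
    · subst hap; simp
    · have := h (Matrix.single a a 1 - Matrix.single p p 1) (by simp)
      rw [sub_mul, Matrix.trace_sub, aux_tr, aux_tr] at this
      simp only [Matrix.smul_apply, Matrix.one_apply_eq, smul_eq_mul, mul_one]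
      linear_combination this
  · have := h (Matrix.single b a 1) (Matrix.trace_single_eq_of_ne _ _ _ (Ne.symm hab))
    rw [aux_tr] at this
    simp [Matrix.one_apply, hab, this]

/-- Nondegeneracy criterion for a symmetric invariant bilinear form on `gl_n(F)` that
restricts to `c·tr(xy)` on `sl_n(F) × gl_n(F)`: it is nondegenerate iff
`B(e_jj, e_jj) ≠ c(n-1)/n`. -/
theorem stmt_8 (F : Type*) [Field F] [CharZero F] (n : ℕ) (hn : 2 ≤ n) (j : Fin n)
    (B : Matrix (Fin n) (Fin n) F →ₗ[F] Matrix (Fin n) (Fin n) F →ₗ[F] F)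
    (hsymm : ∀ x y, B x y = B y x)
    (hinv : ∀ x y z, B ⁅x, y⁆ z = B x ⁅y, z⁆)
    (c : F) (hc : c ≠ 0)
    (htr : ∀ x y, Matrix.trace x = 0 → B x y = c * Matrix.trace (x * y)) :
    (∀ x, (∀ y, B x y = 0) → x = 0) ↔
      B (Matrix.single j j 1) (Matrix.single j j 1)
        ≠ c * ((n : F) - 1) / (n : F) := by
  have hn0 : (n : F) ≠ 0 := Nat.cast_ne_zero.mpr (by omega)
  set e : Matrix (Fin n) (Fin n) F := Matrix.single j j 1 with he
  set e₀ : Matrix (Fin n) (Fin n) F := e - (n : F)⁻¹ • 1 with he0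
  have htr1 : Matrix.trace (1 : Matrix (Fin n) (Fin n) F) = (n : F) := by simp
  have htre : Matrix.trace e = 1 := Matrix.trace_single_eq_same j 1
  have htre0 : Matrix.trace e₀ = 0 := by
    simp [he0, htre, htr1, inv_mul_cancel₀ hn0]
  -- B y 1 = (trace y / n) * B 1 1
  have hBy1 : ∀ y, B y 1 = Matrix.trace y * (n : F)⁻¹ * B 1 1 := by
    intro y
    have hy0 : Matrix.trace (y - (Matrix.trace y * (n : F)⁻¹) • 1) = 0 := by
      simp [htr1]; field_simp; simp
    have := htr _ (1 : Matrix (Fin n) (Fin n) F) hy0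
    rw [sub_mul, smul_mul_assoc, one_mul, Matrix.trace_sub, Matrix.trace_smul, htr1,
      smul_eq_mul] at this
    have h2 : B (y - (Matrix.trace y * (n : F)⁻¹) • 1) 1
        = B y 1 - (Matrix.trace y * (n : F)⁻¹) * B 1 1 := by
      simp
    rw [h2] at this
    have : B y 1 - Matrix.trace y * (n : F)⁻¹ * B 1 1 = 0 := by
      rw [this]; field_simp; simp
    linear_combination this
  -- value of B 1 1
  have hB11 : B e e = c * (1 - (n : F)⁻¹) + (n : F)⁻¹ * ((n : F)⁻¹ * B 1 1) := by
    have hsplit : B e e = B e₀ e + (n : F)⁻¹ * B 1 e := by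
      have : e = e₀ + (n : F)⁻¹ • 1 := by simp [he0]
      nth_rewrite 1 [this]
      simp
    have h1 : B e₀ e = c * (1 - (n : F)⁻¹) := by
      rw [htr _ _ htre0, he0, sub_mul, smul_mul_assoc, one_mul, Matrix.trace_sub,
        Matrix.trace_smul]
      have : Matrix.trace (e * e) = 1 := by
        rw [he, Matrix.single_mul_single_same, mul_one, htre]
      rw [this, htre, smul_eq_mul, mul_one]
    have h2 : B 1 e = (n : F)⁻¹ * B 1 1 := by
      rw [hsymm, hBy1 e, htre, one_mul]
    rw [hsplit, h1, h2]
  have key : (B e e ≠ c * ((n : F) - 1) / (n : F)) ↔ B 1 1 ≠ 0 := by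
    rw [hB11]
    constructor
    · intro h h0; apply h; rw [h0]; field_simp; ring
    · intro h h0; apply h
      field_simp at h0
      have h1 : B 1 1 * ((n : F) * (n : F)) = 0 := by linear_combination ((n : F) * (n : F)) * h0
      exact (mul_eq_zero.mp h1).resolve_right (mul_ne_zero hn0 hn0)
  rw [key]
  constructor
  · intro hnd h0
    have h1 : ∀ y, B (1 : Matrix (Fin n) (Fin n) F) y = 0 := by
      intro y
      rw [hsymm, hBy1, h0, mul_zero]
    have := hnd 1 h1
    have : (1 : Matrix (Fin n) (Fin n) F) j j = 0 := by rw [this]; rfl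
    simp at this
  · intro hB11ne x hx
    have hxs : x = x j j • 1 := by
      apply aux_scalar
      intro y hy
      have := hx y
      rw [hsymm, htr _ _ hy] at this
      exact (mul_eq_zero.mp this).resolve_left hc
    have := hx 1
    rw [hxs] at this
    rw [LinearMap.map_smul, LinearMap.smul_apply, smul_eq_mul] at this
    have hxjj : x j j = 0 := (mul_eq_zero.mp this).resolve_right hB11ne
    rw [hxs, hxjj, zero_smul]
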